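/- Let f : A → B be a linear map between finite-dimensional vector spaces over a field F, let k be an ordered basis of ker f, and let b = (b_1,…,b_s) be an ordered basis of im f. If b̃^(1) and b̃^(2) are two liftings of b (i.e. tuples in A with f(b̃^(r)_j) = b_j for all j), then (k, b̃^(1)) and (k, b̃^(2)) are ordered bases of A and [(k, b̃^(1))/(k, b̃^(2))] = 1. -/

import Mathlib

/-- Auxiliary: a lifting of a basis of the range, prepended with a basis of the
kernel, yields a basis of the domain. -/
theorem torsion_lifting_basis
    {F A B : Type} [Field F]
    [AddCommGroup A] [Module F A]
    [AddCommGroup B] [Module F B]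
    (f : A →ₗ[F] B) {r s : ℕ}
    (k : Module.Basis (Fin r) F (LinearMap.ker f))
    (b : Module.Basis (Fin s) F (LinearMap.range f))
    (t : Fin s → A)
    (ht : ∀ j, f (t j) = (b j : B)) :
    ∃ Bas : Module.Basis (Fin r ⊕ Fin s) F A,
        ⇑Bas = Sum.elim (fun j => (k j : A)) t := by
  classical
  set sB : (LinearMap.range f) →ₗ[F] A := b.constr F t with hsB
  have hfs : ∀ y : LinearMap.range f, f (sB y) = (y : B) := by
    intro y
    have h : (f ∘ₗ sB) y = (LinearMap.range f).subtype y := by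
      refine LinearMap.congr_fun (b.ext fun j => ?_) y
      simp [hsB, ht]
    simpa using h
  set φ : (LinearMap.ker f × LinearMap.range f) →ₗ[F] A :=
    (LinearMap.ker f).subtype.coprod sB with hφ
  have hbij : Function.Bijective φ := by
    constructor
    · rw [← LinearMap.ker_eq_bot, LinearMap.ker_eq_bot']
      rintro ⟨x, y⟩ h
      have h' : (x : A) + sB y = 0 := by simpa [hφ] using h
      have hy : (y : B) = 0 := by
        have := congrArg f h'
        simpa [map_add, hfs, x.2] using this
      have hy0 : y = 0 := Subtype.ext hy
      have hx : (x : A) = 0 := by simpa [hy0] using h'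
      simp [Prod.ext_iff, Subtype.ext_iff, hx, hy0]
    · intro a
      refine ⟨(⟨a - sB ⟨f a, ⟨a, rfl⟩⟩, ?_⟩, ⟨f a, ⟨a, rfl⟩⟩), ?_⟩
      · simp [LinearMap.mem_ker, map_sub, hfs]
      · simp [hφ]
  refine ⟨(k.prod b).map (LinearEquiv.ofBijective φ hbij), ?_⟩
  funext i
  cases i with
  | inl i =>
      simp [Module.Basis.map_apply, Module.Basis.prod_apply, hφ]
  | inr j =>
      simp [Module.Basis.map_apply, Module.Basis.prod_apply, hφ, hsB]

/-- Lemma 2.4. Let `f : A → B` be a linear map between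
finite-dimensional vector spaces over a field `F`, let `k` be an ordered basis of
`ker f` and `b` an ordered basis of `im f`.  If `t₁` and `t₂` are two liftings of `b`
(i.e. `f (tᵣ j) = b j` for all `j`), then the concatenations `(k, t₁)` and `(k, t₂)`
are ordered bases of `A`, and the determinant of the transition matrix
`[(k, t₁)/(k, t₂)]` equals `1`. -/
theorem torsion_lifting_lemma
    {F A B : Type} [Field F]
    [AddCommGroup A] [Module F A] [FiniteDimensional F A]
    [AddCommGroup B] [Module F B] [FiniteDimensional F B]
    (f : A →ₗ[F] B) {r s : ℕ}
    (k : Module.Basis (Fin r) F (LinearMap.ker f))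
    (b : Module.Basis (Fin s) F (LinearMap.range f))
    (t₁ t₂ : Fin s → A)
    (ht₁ : ∀ j, f (t₁ j) = (b j : B))
    (ht₂ : ∀ j, f (t₂ j) = (b j : B)) :
    (∃ B₁ : Module.Basis (Fin r ⊕ Fin s) F A,
        ⇑B₁ = Sum.elim (fun j => (k j : A)) t₁) ∧
    (∃ B₂ : Module.Basis (Fin r ⊕ Fin s) F A,
        ⇑B₂ = Sum.elim (fun j => (k j : A)) t₂) ∧
    (∀ B₁ B₂ : Module.Basis (Fin r ⊕ Fin s) F A,
        ⇑B₁ = Sum.elim (fun j => (k j : A)) t₁ →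
        ⇑B₂ = Sum.elim (fun j => (k j : A)) t₂ →
        (B₂.toMatrix ⇑B₁).det = 1) := by
  classical
  refine ⟨torsion_lifting_basis f k b t₁ ht₁, torsion_lifting_basis f k b t₂ ht₂, ?_⟩
  intro B₁ B₂ h₁ h₂
  -- the difference of the liftings lies in the kernel, hence in the span of `k`
  have hker : ∀ j j', (B₂.repr (t₁ j)) (Sum.inr j') = if j = j' then 1 else 0 := by
    intro j j'
    set d : A := t₁ j - t₂ j with hd
    have hdk : d ∈ LinearMap.ker f := by
      simp [LinearMap.mem_ker, hd, map_sub, ht₁, ht₂]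
    have hrepr_d : (B₂.repr d) (Sum.inr j') = 0 := by
      have hsum : (∑ i, (k.repr ⟨d, hdk⟩) i • (k i : A)) = d := by
        have h := congrArg ((LinearMap.ker f).subtype) (k.sum_repr ⟨d, hdk⟩)
        simpa only [map_sum, map_smul, Submodule.subtype_apply] using h
      obtain ⟨c, hc⟩ : ∃ c : Fin r → F, ∑ i, c i • (k i : A) = d := ⟨_, hsum⟩
      rw [← hc, map_sum, Finsupp.finset_sum_apply]
      simp only [map_smul, Finsupp.smul_apply]
      refine Finset.sum_eq_zero fun i _ => ?_
      have : ((k i : A)) = B₂ (Sum.inl i) := by rw [h₂]; simp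
      rw [this]
      simp [Module.Basis.repr_self]
    have ht : t₁ j = t₂ j + d := by simp [hd]
    have ht2 : t₂ j = B₂ (Sum.inr j) := by rw [h₂]; simp
    rw [ht, map_add, Finsupp.add_apply, hrepr_d, add_zero, ht2, Module.Basis.repr_self]
    simp [Finsupp.single_apply, Sum.inr.injEq, eq_comm]
  have hM : B₂.toMatrix ⇑B₁ =
      Matrix.fromBlocks 1 (Matrix.of fun i j => (B₂.repr (t₁ j)) (Sum.inl i)) 0 1 := by
    ext i j
    cases i with
    | inl i =>
        cases j with
        | inl j =>
            have : B₁ (Sum.inl j) = B₂ (Sum.inl j) := by rw [h₁, h₂]; rfl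
            simp [Module.Basis.toMatrix_apply, this, Module.Basis.repr_self,
              Matrix.fromBlocks, Finsupp.single_apply, Matrix.one_apply, eq_comm]
        | inr j =>
            have : B₁ (Sum.inr j) = t₁ j := by rw [h₁]; simp
            simp [Module.Basis.toMatrix_apply, this, Matrix.fromBlocks]
    | inr i =>
        cases j with
        | inl j =>
            have : B₁ (Sum.inl j) = B₂ (Sum.inl j) := by rw [h₁, h₂]; rfl
            simp [Module.Basis.toMatrix_apply, this, Module.Basis.repr_self,
              Matrix.fromBlocks, Finsupp.single_apply]
        | inr j =>
            have : B₁ (Sum.inr j) = t₁ j := by rw [h₁]; simp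
            simp [Module.Basis.toMatrix_apply, this, hker, Matrix.fromBlocks,
              Matrix.one_apply, eq_comm]
  rw [hM, Matrix.det_fromBlocks_zero₂₁]
  simp
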